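/- Under the sensor setup and posterior definitions, suppose ΔR_j = 0 for all j ∈ {1,…,N}. (1) If ΔQ ≻ 0, then Σ ≺ Σ^f for any nonnegative fusion weights; moreover, with the unit fusion weights a_j = 1 for all j (the L → ∞ limit of the consensus weights), Σ ⪯ Σ^t ≺ Σ^f. (2) If ΔQ ≺ 0, then Σ^f ≺ Σ for any nonnegative fusion weights; moreover, with the unit fusion weights, Σ^f ⪯ Σ ⪯ Σ^t. (Theorem 5 of the paper, with the asymptotic inequalities stated at the limiting unit weights.) -/

import Mathlib

open Matrix

section RingLemmas
variable {A : Type*} [Ring A]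

lemma ring_inv_diff (a b X Y : A) (h1 : a*X = 1) (h2 : X*a = 1) (h3 : b*Y = 1) (h4 : Y*b = 1) :
    a - b = b*(Y - X)*b + (b*(Y-X))*a*((Y-X)*b) := by
  have e1 : b*(Y-X) = 1 - b*X := by rw [mul_sub, h3]
  have e2 : (Y-X)*b = 1 - X*b := by rw [sub_mul, h4]
  rw [e1, e2]
  have h5 : (1 - b*X)*b + (1 - b*X)*a*(1 - X*b)
      = b - b*X*b + a - (a*X)*b - b*(X*a) + b*(X*a)*(X*b) := by noncomm_ring
  rw [h5, h1, h2]
  noncomm_ring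

lemma ring_key2 (S J X Y Pm Q : A)
    (hS : S*X + S*Q = 1) (hS' : X*S + Q*S = 1)
    (hJ : J*Y + J*Q = 1) (hJ' : Y*J + Q*J = 1)
    (hPY : Pm*Y = 1) (hYP : Y*Pm = 1) :
    S*X*Pm*X*S + S*Q*S - J = (S - J)*(Q*Pm*Q + Q)*(S - J) := by
  have eSQ : S*Q = 1 - S*X := eq_sub_of_add_eq' hS
  have eQS : Q*S = 1 - X*S := eq_sub_of_add_eq' hS'
  have eJQ : J*Q = 1 - J*Y := eq_sub_of_add_eq' hJ
  have eQJ : Q*J = 1 - Y*J := eq_sub_of_add_eq' hJ'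
  have eJY : J*Y = 1 - J*Q := eq_sub_of_add_eq hJ
  have eXS : X*S = 1 - Q*S := eq_sub_of_add_eq hS'
  have f1 : X*Pm*Y = X := by rw [mul_assoc, hPY, mul_one]
  have f2 : Y*Pm*X = X := by rw [hYP, one_mul]
  have f3 : Y*Pm*Y = Y := by rw [hYP, one_mul]
  have g : J*Y*S - J*(X*S) = S - J := by
    rw [eJY, eXS]; noncomm_ring
  have h1 : (S - J)*(Q*Pm*Q + Q)*(S - J)
      = (S*Q)*Pm*(Q*S) - (S*Q)*Pm*(Q*J) - (J*Q)*Pm*(Q*S) + (J*Q)*Pm*(Q*J)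
        + (S*Q)*S - (S*Q)*J - (J*Q)*S + (J*Q)*J := by noncomm_ring
  have h2 : (1 - S*X)*Pm*(1 - X*S) - (1 - S*X)*Pm*(1 - Y*J) - (1 - J*Y)*Pm*(1 - X*S)
        + (1 - J*Y)*Pm*(1 - Y*J) + (1 - S*X)*S - (1 - S*X)*J - (1 - J*Y)*S + (1 - J*Y)*J
      = S*(X*Pm*X)*S - S*(X*Pm*Y)*J - J*(Y*Pm*X)*S + J*(Y*Pm*Y)*J
        - S*X*S + S*X*J + J*Y*S - J*Y*J := by noncomm_ring
  have h4 : S*X*Pm*X*S + (1 - S*X)*S - J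
      = S*(X*Pm*X)*S - S*X*J - J*X*S + J*Y*J - S*X*S + S*X*J + J*Y*S - J*Y*J
        + ((S - J) - (J*Y*S - J*(X*S))) := by noncomm_ring
  rw [h1, eSQ, eQS, eJQ, eQJ, h2, f1, f2, f3, h4, g, sub_self, add_zero]

lemma ring_key3 (S X Q Pf Pm : A) (hS : S*X + S*Q = 1) (hXPf : X*Pf = 1) :
    S - (S*X*Pm*X*S + S*Q*S) = S*X*(Pf - Pm)*X*S := by
  have eSQ : S*Q = 1 - S*X := eq_sub_of_add_eq' hS
  have h : S*X*Pf = S := by rw [mul_assoc, hXPf, mul_one]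
  have h2 : S*X*(Pf - Pm)*X*S = (S*X*Pf)*(X*S) - (S*X*Pm)*(X*S) := by noncomm_ring
  rw [h2, h, eSQ]
  noncomm_ring

end RingLemmas

section MatrixLemmas
variable {m l : Type*} [Fintype m] [DecidableEq m] [Fintype l]

lemma aux_psd_smul {c : ℝ} {M : Matrix m m ℝ} (hc : 0 ≤ c) (hM : M.PosSemidef) :
    (c • M).PosSemidef := by
  refine posSemidef_iff_dotProduct_mulVec.2 ⟨?_, fun x => ?_⟩
  · show (c • M)ᴴ = c • M
    rw [conjTranspose_smul, star_trivial, hM.1.eq]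
  · rw [smul_mulVec, dotProduct_smul]
    exact smul_nonneg hc ((posSemidef_iff_dotProduct_mulVec.1 hM).2 x)

lemma aux_psd_sum {ι : Type*} (s : Finset ι) (f : ι → Matrix m m ℝ)
    (h : ∀ i ∈ s, (f i).PosSemidef) : (∑ i ∈ s, f i).PosSemidef :=
  Finset.sum_induction f _ (fun _ _ ha hb => ha.add hb) Matrix.PosSemidef.zero h

lemma aux_psd_conj {A : Matrix l l ℝ} (hA : A.PosSemidef) (B : Matrix l m ℝ) :
    (Bᵀ * A * B).PosSemidef := by
  have := hA.conjTranspose_mul_mul_same B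
  rwa [conjTranspose_eq_transpose_of_trivial] at this

lemma aux_symm_of_herm {M : Matrix m m ℝ} (h : M.IsHermitian) : Mᵀ = M := by
  rwa [IsHermitian, conjTranspose_eq_transpose_of_trivial] at h

lemma aux_psd_conj_symm {A M : Matrix m m ℝ} (hA : A.PosSemidef) (hM : Mᵀ = M) :
    (M * A * M).PosSemidef := by
  have := aux_psd_conj hA M
  rwa [hM] at this

lemma aux_pd_conj {A M : Matrix m m ℝ} (hA : A.PosDef) (hM : IsUnit M) :
    (Mᵀ * A * M).PosDef := by
  rw [← conjTranspose_eq_transpose_of_trivial]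
  refine posDef_iff_dotProduct_mulVec.2 ⟨isHermitian_conjTranspose_mul_mul M hA.1, fun x hx => ?_⟩
  have hMx : M *ᵥ x ≠ 0 := by
    intro h
    exact hx (Matrix.mulVec_injective_iff_isUnit.2 hM (by rw [h, Matrix.mulVec_zero]))
  simpa only [star_mulVec, dotProduct_mulVec, vecMul_vecMul] using (posDef_iff_dotProduct_mulVec.1 hA).2 (x := M *ᵥ x) hMx

lemma aux_inv_antitone {A B : Matrix m m ℝ} (hA : A.PosDef) (hB : B.PosDef)
    (hBA : (B - A).PosDef) : (A⁻¹ - B⁻¹).PosDef := by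
  have hAd : IsUnit A.det := (Matrix.isUnit_iff_isUnit_det A).mp hA.isUnit
  have hBd : IsUnit B.det := (Matrix.isUnit_iff_isUnit_det B).mp hB.isUnit
  have key := ring_inv_diff A⁻¹ B⁻¹ A B (Matrix.nonsing_inv_mul A hAd)
    (Matrix.mul_nonsing_inv A hAd) (Matrix.nonsing_inv_mul B hBd)
    (Matrix.mul_nonsing_inv B hBd)
  rw [key]
  have hBAsymm : (B - A)ᵀ = B - A := by
    rw [transpose_sub, aux_symm_of_herm hA.1, aux_symm_of_herm hB.1]
  have hBinvsymm : (B⁻¹)ᵀ = B⁻¹ := aux_symm_of_herm hB.1.inv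
  apply Matrix.PosDef.add
  · have := aux_pd_conj hBA hB.inv.isUnit
    rwa [hBinvsymm] at this
  · have hMu : IsUnit ((B - A) * B⁻¹) := hBA.isUnit.mul hB.inv.isUnit
    have := aux_pd_conj hA.inv hMu
    rwa [transpose_mul, hBinvsymm, hBAsymm] at this

end MatrixLemmas

/-- Theorem 5 of the paper (case `ΔRⱼ = 0` for all `j`, asymptotic inequalities
stated at the limiting unit weights `aⱼ = 1`):
(1) `ΔQ ≻ 0` implies `Σ ≺ Σᶠ` for any nonnegative weights, and at unit weights
`Σ ⪯ Σᵗ ≺ Σᶠ`; (2) `ΔQ ≺ 0` implies `Σᶠ ≺ Σ` for any nonnegative weights, and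
at unit weights `Σᶠ ⪯ Σ ⪯ Σᵗ`. -/
theorem stmt15 {n N : ℕ} (hn : 1 ≤ n) (hN : 1 ≤ N)
    (md : Fin N → ℕ) (hmd : ∀ j, 1 ≤ md j)
    (H : ∀ j, Matrix (Fin (md j)) (Fin n) ℝ)
    (R Ru : ∀ j, Matrix (Fin (md j)) (Fin (md j)) ℝ)
    (hRsymm : ∀ j, (R j).IsSymm) (hRusymm : ∀ j, (Ru j).IsSymm)
    (hR : ∀ j, (R j).PosDef) (hRu : ∀ j, (Ru j).PosDef)
    (hdR : ∀ j, Ru j - R j = 0)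
    (P dQ : Matrix (Fin n) (Fin n) ℝ) (hPsymm : P.IsSymm) (hP : P.PosDef)
    (hdQsymm : dQ.IsSymm)
    (Pf : Matrix (Fin n) (Fin n) ℝ) (hPfdef : Pf = P + dQ) (hPf : Pf.PosDef)
    (Phi Phif Phit Sig Sigf Sigt : (Fin N → ℝ) → Matrix (Fin n) (Fin n) ℝ)
    (hPhi : ∀ a, Phi a = ∑ j, a j • ((H j)ᵀ * (R j)⁻¹ * H j))
    (hPhif : ∀ a, Phif a = ∑ j, a j • ((H j)ᵀ * (Ru j)⁻¹ * H j))
    (hPhit : ∀ a, Phit a =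
      ∑ j, (a j) ^ 2 • ((H j)ᵀ * (Ru j)⁻¹ * R j * (Ru j)⁻¹ * H j))
    (hSig : ∀ a, Sig a = (P⁻¹ + Phi a)⁻¹)
    (hSigf : ∀ a, Sigf a = (Pf⁻¹ + Phif a)⁻¹)
    (hSigt : ∀ a, Sigt a =
      Sigf a * Pf⁻¹ * P * Pf⁻¹ * Sigf a + Sigf a * Phit a * Sigf a) :
    (dQ.PosDef →
      (∀ a : Fin N → ℝ, (∀ j, 0 ≤ a j) → (Sigf a - Sig a).PosDef) ∧
      (Sigt (fun _ => 1) - Sig (fun _ => 1)).PosSemidef ∧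
      (Sigf (fun _ => 1) - Sigt (fun _ => 1)).PosDef) ∧
    ((-dQ).PosDef →
      (∀ a : Fin N → ℝ, (∀ j, 0 ≤ a j) → (Sig a - Sigf a).PosDef) ∧
      (Sig (fun _ => 1) - Sigf (fun _ => 1)).PosSemidef ∧
      (Sigt (fun _ => 1) - Sig (fun _ => 1)).PosSemidef) := by
  set a1 : Fin N → ℝ := fun _ => 1 with ha1def
  have ha1pos : ∀ j, (0:ℝ) ≤ a1 j := fun _ => zero_le_one
  have hRR : ∀ j, Ru j = R j := fun j => sub_eq_zero.mp (hdR j)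
  have hRdet : ∀ j, IsUnit (R j).det :=
    fun j => (Matrix.isUnit_iff_isUnit_det _).mp (hR j).isUnit
  have hPhifPhi : ∀ a, Phif a = Phi a := by
    intro a; rw [hPhif, hPhi]
    exact Finset.sum_congr rfl fun j _ => by rw [hRR]
  have hPhit1 : Phit a1 = Phi a1 := by
    rw [hPhit, hPhi]
    refine Finset.sum_congr rfl fun j _ => ?_
    have h1 : a1 j = 1 := rfl
    rw [h1, one_pow, one_smul, one_smul, hRR,
      Matrix.mul_assoc ((H j)ᵀ) ((R j)⁻¹) (R j),
      Matrix.nonsing_inv_mul (R j) (hRdet j), Matrix.mul_one]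
  have hPhiPSD : ∀ a : Fin N → ℝ, (∀ j, 0 ≤ a j) → (Phi a).PosSemidef := by
    intro a ha
    rw [hPhi]
    exact aux_psd_sum _ _ fun j _ =>
      aux_psd_smul (ha j) (aux_psd_conj (hR j).inv.posSemidef (H j))
  have hPfP : Pf - P = dQ := by rw [hPfdef]; abel
  have hPPf : P - Pf = -dQ := by rw [hPfdef]; abel
  have hSigfPD : ∀ a, (∀ j, 0 ≤ a j) → (Pf⁻¹ + Phi a).PosDef :=
    fun a ha => hPf.inv.add_posSemidef (hPhiPSD a ha)
  have hSigPDm : ∀ a, (∀ j, 0 ≤ a j) → (P⁻¹ + Phi a).PosDef :=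
    fun a ha => hP.inv.add_posSemidef (hPhiPSD a ha)
  have hmain1 : ∀ a, (∀ j, 0 ≤ a j) → (P⁻¹ - Pf⁻¹).PosDef → (Sigf a - Sig a).PosDef := by
    intro a ha hd
    rw [hSigf, hSig, hPhifPhi]
    apply aux_inv_antitone (hSigfPD a ha) (hSigPDm a ha)
    have e : (P⁻¹ + Phi a) - (Pf⁻¹ + Phi a) = P⁻¹ - Pf⁻¹ := by abel
    rw [e]; exact hd
  have hmain2 : ∀ a, (∀ j, 0 ≤ a j) → (Pf⁻¹ - P⁻¹).PosDef → (Sig a - Sigf a).PosDef := by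
    intro a ha hd
    rw [hSigf, hSig, hPhifPhi]
    apply aux_inv_antitone (hSigPDm a ha) (hSigfPD a ha)
    have e : (Pf⁻¹ + Phi a) - (P⁻¹ + Phi a) = Pf⁻¹ - P⁻¹ := by abel
    rw [e]; exact hd
  -- unit-weight facts
  have hdetXQ : IsUnit (Pf⁻¹ + Phi a1).det :=
    (Matrix.isUnit_iff_isUnit_det _).mp (hSigfPD a1 ha1pos).isUnit
  have hdetYQ : IsUnit (P⁻¹ + Phi a1).det :=
    (Matrix.isUnit_iff_isUnit_det _).mp (hSigPDm a1 ha1pos).isUnit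
  have hdetP : IsUnit P.det := (Matrix.isUnit_iff_isUnit_det _).mp hP.isUnit
  have hdetPf : IsUnit Pf.det := (Matrix.isUnit_iff_isUnit_det _).mp hPf.isUnit
  have hS1 : Sigf a1 * Pf⁻¹ + Sigf a1 * Phi a1 = 1 := by
    rw [← mul_add, hSigf, hPhifPhi, Matrix.nonsing_inv_mul _ hdetXQ]
  have hS1' : Pf⁻¹ * Sigf a1 + Phi a1 * Sigf a1 = 1 := by
    rw [← add_mul, hSigf, hPhifPhi, Matrix.mul_nonsing_inv _ hdetXQ]
  have hJ1 : Sig a1 * P⁻¹ + Sig a1 * Phi a1 = 1 := by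
    rw [← mul_add, hSig, Matrix.nonsing_inv_mul _ hdetYQ]
  have hJ1' : P⁻¹ * Sig a1 + Phi a1 * Sig a1 = 1 := by
    rw [← add_mul, hSig, Matrix.mul_nonsing_inv _ hdetYQ]
  have hPY : P * P⁻¹ = 1 := Matrix.mul_nonsing_inv _ hdetP
  have hYP : P⁻¹ * P = 1 := Matrix.nonsing_inv_mul _ hdetP
  have hSPD : (Sigf a1).PosDef := by
    rw [hSigf, hPhifPhi]; exact (hSigfPD a1 ha1pos).inv
  have hJPD : (Sig a1).PosDef := by
    rw [hSig]; exact (hSigPDm a1 ha1pos).inv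
  have hSsymm : (Sigf a1)ᵀ = Sigf a1 := aux_symm_of_herm hSPD.1
  have hJsymm : (Sig a1)ᵀ = Sig a1 := aux_symm_of_herm hJPD.1
  have hQpsd : (Phi a1).PosSemidef := hPhiPSD a1 ha1pos
  have hQsymm : (Phi a1)ᵀ = Phi a1 := aux_symm_of_herm hQpsd.1
  have hSJsymm : (Sigf a1 - Sig a1)ᵀ = Sigf a1 - Sig a1 := by
    rw [transpose_sub, hSsymm, hJsymm]
  have hkey2 := ring_key2 (Sigf a1) (Sig a1) Pf⁻¹ P⁻¹ P (Phi a1) hS1 hS1' hJ1 hJ1' hPY hYP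
  have hts : (Sigt a1 - Sig a1).PosSemidef := by
    have e : Sigt a1 - Sig a1
        = (Sigf a1 - Sig a1) * (Phi a1 * P * Phi a1 + Phi a1) * (Sigf a1 - Sig a1) := by
      rw [hSigt, hPhit1]; exact hkey2
    rw [e]
    exact aux_psd_conj_symm ((aux_psd_conj_symm hP.posSemidef hQsymm).add hQpsd) hSJsymm
  refine ⟨fun hdQ => ?_, fun hdQ => ?_⟩
  · have hPfPpd : (Pf - P).PosDef := by rw [hPfP]; exact hdQ
    have hd : (P⁻¹ - Pf⁻¹).PosDef := aux_inv_antitone hP hPf hPfPpd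
    refine ⟨fun a ha => hmain1 a ha hd, hts, ?_⟩
    -- Sigf - Sigt
    have hkey3 := ring_key3 (Sigf a1) Pf⁻¹ (Phi a1) Pf P hS1
      (Matrix.nonsing_inv_mul _ hdetPf)
    have e : Sigf a1 - Sigt a1
        = Sigf a1 * Pf⁻¹ * (Pf - P) * Pf⁻¹ * Sigf a1 := by
      rw [hSigt, hPhit1]; exact hkey3
    rw [e, hPfP]
    have hXsymm : (Pf⁻¹)ᵀ = Pf⁻¹ := aux_symm_of_herm hPf.1.inv
    have hMu : IsUnit (Pf⁻¹ * Sigf a1) := hPf.inv.isUnit.mul hSPD.isUnit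
    have hc := aux_pd_conj hdQ hMu
    rw [transpose_mul, hXsymm, hSsymm] at hc
    have e2 : Sigf a1 * Pf⁻¹ * dQ * Pf⁻¹ * Sigf a1
        = Sigf a1 * Pf⁻¹ * dQ * (Pf⁻¹ * Sigf a1) := by
      rw [Matrix.mul_assoc (Sigf a1 * Pf⁻¹ * dQ) Pf⁻¹ (Sigf a1)]
    rw [e2]; exact hc
  · have hPPfpd : (P - Pf).PosDef := by rw [hPPf]; exact hdQ
    have hd : (Pf⁻¹ - P⁻¹).PosDef := aux_inv_antitone hPf hP hPPfpd
    exact ⟨fun a ha => hmain2 a ha hd, (hmain2 a1 ha1pos hd).posSemidef, hts⟩
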